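/- (Characterization of globally calibrated curves) Let α ∈ ℝ and let γ : ℝ → ℝⁿ be absolutely continuous. Then γ is a globally calibrated curve of u_α⁻ if and only if for all a < b one has ∫_a^b e^{F(τ)} (L(γ(τ),γ'(τ),τ) + α) dτ = inf { ∫_a^b e^{F(τ)} (L(η(τ),η'(τ),τ) + α) dτ : η : [a,b] → ℝⁿ absolutely continuous, η(a) − γ(a) ∈ ℤⁿ, η(b) − γ(b) ∈ ℤⁿ }. -/

import Mathlib

open MeasureTheory Real Filter
open scoped RealInnerProductSpace

noncomputable section

/-- `ℝⁿ` with the Euclidean norm. -/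
abbrev Evec (n : ℕ) : Type := EuclideanSpace ℝ (Fin n)

/-- The vector of `Evec n` with integer coordinates `k`. -/
def intVec {n : ℕ} (k : Fin n → ℤ) : Evec n := WithLp.toLp 2 (fun i => (k i : ℝ))

/-- `γ` is absolutely continuous on the interval `S` with derivative `γ'`:
on any subinterval of `S` it is the indefinite integral of the locally
integrable function `γ'`. -/
def ACOn {n : ℕ} (γ γ' : ℝ → Evec n) (S : Set ℝ) : Prop :=
  ∀ a ∈ S, ∀ b ∈ S,
    IntervalIntegrable γ' MeasureTheory.volume a b ∧ γ b = γ a + ∫ τ in a..b, γ' τ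

/-- The set of (finite) actions `∫_{-∞}^t e^{F(s)-F(t)} (L + α)` of admissible
absolutely continuous curves `γ : (-∞, t] → ℝⁿ` with `γ t = x`. -/
def wkSet {n : ℕ} (F : ℝ → ℝ) (L : Evec n → Evec n → ℝ → ℝ) (α : ℝ)
    (x : Evec n) (t : ℝ) : Set ℝ :=
  { r | ∃ γ γ' : ℝ → Evec n, ACOn γ γ' (Set.Iic t) ∧ γ t = x ∧
      MeasureTheory.IntegrableOn
        (fun s => Real.exp (F s - F t) * (L (γ s) (γ' s) s + α)) (Set.Iic t) ∧
      r = ∫ s in Set.Iic t, Real.exp (F s - F t) * (L (γ s) (γ' s) s + α) }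

/-- The weak KAM solution `u_α⁻(x,t)`. -/
def uWK {n : ℕ} (F : ℝ → ℝ) (L : Evec n → Evec n → ℝ → ℝ) (α : ℝ)
    (x : Evec n) (t : ℝ) : ℝ :=
  sInf (wkSet F L α x t)

open Set
open scoped Topology

section AuxWKAM

variable {n : ℕ}

lemma intVec_zero : (intVec (fun _ => 0) : Evec n) = 0 := by
  ext i; simp [intVec]

lemma acOn_mono {γ γ' : ℝ → Evec n} {S T : Set ℝ} (h : ACOn γ γ' S) (hTS : T ⊆ S) :
    ACOn γ γ' T := fun a ha b hb => h a (hTS ha) b (hTS hb)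

lemma acOn_of_le {γ γ' : ℝ → Evec n} {S : Set ℝ}
    (h : ∀ a ∈ S, ∀ b ∈ S, a ≤ b →
      IntervalIntegrable γ' MeasureTheory.volume a b ∧ γ b = γ a + ∫ τ in a..b, γ' τ) :
    ACOn γ γ' S := by
  intro a ha b hb
  rcases le_total a b with hab | hba
  · exact h a ha b hb hab
  · obtain ⟨hi, he⟩ := h b hb a ha hba
    refine ⟨hi.symm, ?_⟩
    rw [intervalIntegral.integral_symm, he]
    abel

lemma F_continuous {f F : ℝ → ℝ} (hf : Continuous f)
    (hF : ∀ t, F t = ∫ τ in (0:ℝ)..t, f τ) : Continuous F := by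
  have h := intervalIntegral.continuous_primitive (μ := volume) (fun a b => hf.intervalIntegrable a b) 0
  have h2 : F = fun b => ∫ τ in (0:ℝ)..b, f τ := funext hF
  rw [h2]; exact h

lemma F_add_one {f F : ℝ → ℝ} (hf : Continuous f) (hfper : ∀ t, f (t + 1) = f t)
    (hF : ∀ t, F t = ∫ τ in (0:ℝ)..t, f τ) (t : ℝ) :
    F (t + 1) = F t + ∫ τ in (0:ℝ)..1, f τ := by
  have hper : Function.Periodic f 1 := hfper
  have h1 : (∫ τ in t..t+1, f τ) = ∫ τ in (0:ℝ)..0+1, f τ :=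
    hper.intervalIntegral_add_eq t 0
  rw [hF, hF, ← intervalIntegral.integral_add_adjacent_intervals
    (hf.intervalIntegrable 0 t) (hf.intervalIntegrable t (t+1)), h1, zero_add]

lemma F_add_int {f F : ℝ → ℝ} (hf : Continuous f) (hfper : ∀ t, f (t + 1) = f t)
    (hF : ∀ t, F t = ∫ τ in (0:ℝ)..t, f τ) (t : ℝ) (j : ℤ) :
    F (t + j) = F t + j * (∫ τ in (0:ℝ)..1, f τ) := by
  induction j using Int.induction_on with
  | zero => simp
  | succ k ih =>
      have h1 : t + ((k : ℤ) + 1 : ℤ) = (t + (k : ℤ)) + 1 := by push_cast; ring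
      rw [h1, F_add_one hf hfper hF, ih]; push_cast; ring
  | pred k ih =>
      push_cast at ih ⊢
      have h := F_add_one hf hfper hF (t + (-(k:ℝ) - 1))
      have h1 : t + (-(k:ℝ) - 1) + 1 = t + -(k:ℝ) := by ring
      rw [h1] at h
      linarith

lemma F_lin_bound {f F : ℝ → ℝ} (hf : Continuous f) (hfper : ∀ t, f (t + 1) = f t)
    (hF : ∀ t, F t = ∫ τ in (0:ℝ)..t, f τ) :
    ∃ B : ℝ, 0 ≤ B ∧ ∀ s, |F s - (∫ τ in (0:ℝ)..1, f τ) * s| ≤ B := by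
  set m := ∫ τ in (0:ℝ)..1, f τ with hm
  have hG : Continuous fun s => F s - m * s :=
    (F_continuous hf hF).sub (continuous_const.mul continuous_id)
  obtain ⟨B, hB⟩ := (isCompact_Icc (a := (0:ℝ)) (b := 1)).exists_bound_of_continuousOn
    hG.continuousOn
  refine ⟨max B 0, le_max_right _ _, fun s => ?_⟩
  have h2 : F s = F (Int.fract s) + (⌊s⌋ : ℝ) * m := by
    have h3 := F_add_int hf hfper hF (Int.fract s) ⌊s⌋
    rw [Int.fract_add_floor] at h3
    exact h3
  have h1 : F s - m * s = F (Int.fract s) - m * (Int.fract s) := by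
    rw [h2, Int.fract]; ring
  rw [h1]
  have h4 := hB (Int.fract s) ⟨Int.fract_nonneg s, (Int.fract_lt_one s).le⟩
  rw [Real.norm_eq_abs] at h4
  exact h4.trans (le_max_left _ _)

lemma integral_exp_mul' {m : ℝ} (hm : m ≠ 0) (a b : ℝ) :
    ∫ x in a..b, Real.exp (m * x) = (Real.exp (m * b) - Real.exp (m * a)) / m := by
  have D : ∀ x : ℝ, HasDerivAt (fun y => Real.exp (m * y) / m) (Real.exp (m * x)) x := by
    intro x
    have h1 : HasDerivAt (fun y : ℝ => m * y) m x := by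
      simpa using (hasDerivAt_id x).const_mul m
    have h2 := h1.exp.div_const m
    simpa [mul_div_cancel_right₀ _ hm] using h2
  rw [intervalIntegral.integral_deriv_eq_sub' _ (funext fun x => (D x).deriv)
    (fun x _ => (D x).differentiableAt)
    ((continuous_exp.comp (continuous_const.mul continuous_id)).continuousOn)]
  rw [sub_div]

lemma integrableOn_exp_mul_Iic' {m : ℝ} (hm : 0 < m) (t : ℝ) :
    IntegrableOn (fun s => Real.exp (m * s)) (Set.Iic t) := by
  have hc : Continuous fun s : ℝ => Real.exp (m * s) :=
    continuous_exp.comp (continuous_const.mul continuous_id)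
  refine integrableOn_Iic_of_intervalIntegral_norm_bounded
    (Real.exp (m*t)/m) t (fun y : ℝ => (hc.intervalIntegrable _ _).1) tendsto_id ?_
  filter_upwards with y
  simp only [id_eq]
  have h1 : (∫ x in y..t, ‖Real.exp (m * x)‖) = ∫ x in y..t, Real.exp (m * x) :=
    intervalIntegral.integral_congr fun x _ => norm_of_nonneg (Real.exp_pos _).le
  rw [h1, integral_exp_mul' hm.ne' y t]
  have h2 := (Real.exp_pos (m*y)).le
  gcongr
  linarith

lemma integral_exp_mul_Iic' {m : ℝ} (hm : 0 < m) (t : ℝ) :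
    ∫ s in Set.Iic t, Real.exp (m * s) = Real.exp (m * t) / m := by
  refine tendsto_nhds_unique
    (intervalIntegral_tendsto_integral_Iic t (integrableOn_exp_mul_Iic hm t) tendsto_id) ?_
  have h1 : Tendsto (fun y : ℝ => Real.exp (m * y)) atBot (𝓝 0) :=
    tendsto_exp_atBot.comp (tendsto_id.const_mul_atBot hm)
  have h2 : Tendsto (fun y : ℝ => (Real.exp (m*t) - Real.exp (m*y))/m) atBot
      (𝓝 ((Real.exp (m*t) - 0)/m)) := ((tendsto_const_nhds.sub h1).div_const m)
  rw [sub_zero] at h2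
  refine h2.congr fun y => ?_
  simp only [id_eq]
  rw [integral_exp_mul' hm.ne' y t]

lemma exists_intVec_close (p q : Evec n) :
    ∃ k : Fin n → ℤ, ‖p + intVec k - q‖ ≤ Real.sqrt n := by
  refine ⟨fun i => ⌊q i - p i⌋, ?_⟩
  rw [EuclideanSpace.norm_eq]
  apply Real.sqrt_le_sqrt
  have h1 : ∀ i : Fin n, ‖(p + intVec (fun i => ⌊q i - p i⌋) - q) i‖^2 ≤ 1 := by
    intro i
    have hco : (p + intVec (fun i => ⌊q i - p i⌋) - q) i
        = (⌊q i - p i⌋ : ℝ) - (q i - p i) := by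
      simp [intVec]; ring
    rw [hco, Real.norm_eq_abs]
    have h2 := Int.floor_le (q i - p i)
    have h3 := Int.lt_floor_add_one (q i - p i)
    have h4 : |(⌊q i - p i⌋ : ℝ) - (q i - p i)| ≤ 1 := by
      rw [abs_le]; constructor <;> linarith
    nlinarith [abs_nonneg ((⌊q i - p i⌋ : ℝ) - (q i - p i))]
  calc (∑ i, ‖(p + intVec (fun i => ⌊q i - p i⌋) - q) i‖^2)
      ≤ ∑ _i : Fin n, (1:ℝ) := Finset.sum_le_sum fun i _ => h1 i
    _ = n := by simp

lemma L_t_int {L : Evec n → Evec n → ℝ → ℝ}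
    (hLtper : ∀ (x v : Evec n) (t : ℝ), L x v (t + 1) = L x v t)
    (x v : Evec n) (t : ℝ) (j : ℤ) : L x v (t + j) = L x v t := by
  induction j using Int.induction_on with
  | zero => simp
  | succ k ih =>
      push_cast at ih ⊢
      have h1 : t + ((k:ℝ) + 1) = (t + (k:ℝ)) + 1 := by ring
      rw [h1, hLtper, ih]
  | pred k ih =>
      push_cast at ih ⊢
      have h1 : (t + (-(k:ℝ) - 1)) + 1 = t + -(k:ℝ) := by ring
      have h2 := hLtper x v (t + (-(k:ℝ) - 1))
      rw [h1] at h2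
      rw [← h2, ih]

lemma L_bound {L : Evec n → Evec n → ℝ → ℝ}
    (hLc : Continuous fun q : Evec n × Evec n × ℝ => L q.1 q.2.1 q.2.2)
    (hLxper : ∀ (k : Fin n → ℤ) (x v : Evec n) (t : ℝ), L (x + intVec k) v t = L x v t)
    (hLtper : ∀ (x v : Evec n) (t : ℝ), L x v (t + 1) = L x v t)
    (R : ℝ) :
    ∃ M : ℝ, 0 ≤ M ∧ ∀ x v t, ‖v‖ ≤ R → |L x v t| ≤ M := by
  obtain ⟨M, hM⟩ := (((isCompact_closedBall (0 : Evec n) (Real.sqrt n)).prod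
    ((isCompact_closedBall (0 : Evec n) R).prod (isCompact_Icc (a := (0:ℝ)) (b := 1))))).exists_bound_of_continuousOn
    hLc.continuousOn
  refine ⟨max M 0, le_max_right _ _, fun x v t hv => ?_⟩
  set k : Fin n → ℤ := fun i => -⌊x i⌋ with hk
  have hxk : ‖x + intVec k‖ ≤ Real.sqrt n := by
    rw [EuclideanSpace.norm_eq]
    apply Real.sqrt_le_sqrt
    have h1 : ∀ i : Fin n, ‖(x + intVec k) i‖^2 ≤ 1 := by
      intro i
      have hco : (x + intVec k) i = Int.fract (x i) := by
        simp [intVec, hk, Int.fract, sub_eq_add_neg]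
      rw [hco, Real.norm_eq_abs, abs_of_nonneg (Int.fract_nonneg _)]
      nlinarith [Int.fract_lt_one (x i), Int.fract_nonneg (x i)]
    calc (∑ i, ‖(x + intVec k) i‖^2) ≤ ∑ _i : Fin n, (1:ℝ) :=
        Finset.sum_le_sum fun i _ => h1 i
      _ = n := by simp
  have hL1 : L x v t = L (x + intVec k) v (Int.fract t) := by
    have h2 : L (x + intVec k) v t = L x v t := hLxper k x v t
    have h3 : L (x + intVec k) v t = L (x + intVec k) v (Int.fract t) := by
      conv_lhs => rw [show t = Int.fract t + (⌊t⌋ : ℝ) by rw [Int.fract]; ring]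
      exact L_t_int hLtper _ _ _ ⌊t⌋
    rw [← h2, h3]
  rw [hL1]
  have hmem : ((x + intVec k, v, Int.fract t) : Evec n × Evec n × ℝ) ∈
      (Metric.closedBall (0 : Evec n) (Real.sqrt n)) ×ˢ
        ((Metric.closedBall (0 : Evec n) R) ×ˢ (Icc (0:ℝ) 1)) := by
    refine ⟨?_, ?_, ?_⟩
    · simpa [mem_closedBall_zero_iff] using hxk
    · simpa [mem_closedBall_zero_iff] using hv
    · exact ⟨Int.fract_nonneg t, (Int.fract_lt_one t).le⟩
  have := hM _ hmem
  rw [Real.norm_eq_abs] at this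
  exact this.trans (le_max_left _ _)

section WK

variable {F : ℝ → ℝ} {L : Evec n → Evec n → ℝ → ℝ} {α m B C M₀ : ℝ}

lemma expF_le (hFb : ∀ s, |F s - m*s| ≤ B) (s : ℝ) :
    Real.exp (F s) ≤ Real.exp B * Real.exp (m * s) := by
  rw [← Real.exp_add]
  exact Real.exp_le_exp.mpr (by have := abs_le.mp (hFb s); linarith)

lemma weight_integrableOn (hm : 0 < m) (hFb : ∀ s, |F s - m*s| ≤ B)
    (hFc : Continuous F) (t : ℝ) :
    IntegrableOn (fun s => Real.exp (F s - F t)) (Set.Iic t) := by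
  have h1 : IntegrableOn (fun s => Real.exp (F s)) (Set.Iic t) := by
    refine Integrable.mono' ((integrableOn_exp_mul_Iic hm t).const_mul (Real.exp B))
      ((continuous_exp.comp hFc).aestronglyMeasurable) ?_
    filter_upwards with s
    rw [norm_of_nonneg (Real.exp_pos _).le]
    exact expF_le hFb s
  have h2 : (fun s => Real.exp (F s - F t)) = fun s => (Real.exp (F t))⁻¹ * Real.exp (F s) := by
    funext s; rw [Real.exp_sub]; ring
  rw [h2]; exact h1.const_mul _

lemma weight_integral_le (hm : 0 < m) (hFb : ∀ s, |F s - m*s| ≤ B)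
    (hFc : Continuous F) (t : ℝ) :
    ∫ s in Set.Iic t, Real.exp (F s - F t) ≤ Real.exp (2*B) / m := by
  have hint := weight_integrableOn hm hFb hFc t
  have hmaj : IntegrableOn (fun s => Real.exp (2*B - m*t) * Real.exp (m*s)) (Set.Iic t) :=
    (integrableOn_exp_mul_Iic hm t).const_mul _
  have hpt : ∀ s ∈ Set.Iic t, Real.exp (F s - F t) ≤ Real.exp (2*B - m*t) * Real.exp (m*s) := by
    intro s _
    rw [← Real.exp_add]
    apply Real.exp_le_exp.mpr
    have h1 := abs_le.mp (hFb s); have h2 := abs_le.mp (hFb t); linarith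
  calc (∫ s in Set.Iic t, Real.exp (F s - F t))
      ≤ ∫ s in Set.Iic t, Real.exp (2*B - m*t) * Real.exp (m*s) :=
        setIntegral_mono_on hint hmaj measurableSet_Iic hpt
    _ = Real.exp (2*B - m*t) * (Real.exp (m*t)/m) := by
        rw [integral_const_mul, integral_exp_mul_Iic hm t]
    _ = Real.exp (2*B)/m := by rw [← mul_div_assoc, ← Real.exp_add, sub_add_cancel]

lemma weight_integral_nonneg (t : ℝ) :
    0 ≤ ∫ s in Set.Iic t, Real.exp (F s - F t) :=
  setIntegral_nonneg measurableSet_Iic fun s _ => (Real.exp_pos _).le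

lemma wkSet_lb (hm : 0 < m) (hFb : ∀ s, |F s - m*s| ≤ B) (hFc : Continuous F)
    (hC0 : 0 ≤ C) (hCl : ∀ (x v : Evec n) (s : ℝ), -C ≤ L x v s + α)
    {x : Evec n} {t r : ℝ} (hr : r ∈ wkSet F L α x t) :
    -(C * (Real.exp (2*B) / m)) ≤ r := by
  obtain ⟨ξ, ξ', _, _, hI, rfl⟩ := hr
  have hwint := weight_integrableOn hm hFb hFc t
  have h1 : ∫ s in Set.Iic t, (-C) * Real.exp (F s - F t) ≤
      ∫ s in Set.Iic t, Real.exp (F s - F t) * (L (ξ s) (ξ' s) s + α) := by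
    refine setIntegral_mono_on (hwint.const_mul _) hI measurableSet_Iic fun s _ => ?_
    have h2 := hCl (ξ s) (ξ' s) s
    have h3 := (Real.exp_pos (F s - F t)).le
    nlinarith
  rw [integral_const_mul] at h1
  have h4 := weight_integral_le hm hFb hFc t
  have h5 := weight_integral_nonneg (F := F) t
  nlinarith

lemma wkSet_bddBelow (hm : 0 < m) (hFb : ∀ s, |F s - m*s| ≤ B) (hFc : Continuous F)
    (hC0 : 0 ≤ C) (hCl : ∀ (x v : Evec n) (s : ℝ), -C ≤ L x v s + α)
    (x : Evec n) (t : ℝ) : BddBelow (wkSet F L α x t) :=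
  ⟨-(C * (Real.exp (2*B) / m)), fun _ hr => wkSet_lb hm hFb hFc hC0 hCl hr⟩

lemma const_integrand_integrable (hm : 0 < m) (hFb : ∀ s, |F s - m*s| ≤ B) (hFc : Continuous F)
    (hLc : Continuous fun q : Evec n × Evec n × ℝ => L q.1 q.2.1 q.2.2)
    (hM : ∀ (x : Evec n) (s : ℝ), |L x 0 s| ≤ M₀)
    (x : Evec n) (t : ℝ) :
    IntegrableOn (fun s => Real.exp (F s - F t) * (L x 0 s + α)) (Set.Iic t) := by
  have hLxc : Continuous fun s : ℝ => L x 0 s :=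
    hLc.comp (continuous_const.prodMk (continuous_const.prodMk continuous_id))
  refine Integrable.mono' ((weight_integrableOn hm hFb hFc t).const_mul (M₀ + |α|))
    (Continuous.aestronglyMeasurable ?_) ?_
  · exact (continuous_exp.comp (hFc.sub continuous_const)).mul (hLxc.add continuous_const)
  · filter_upwards with s
    rw [norm_mul, norm_of_nonneg (Real.exp_pos _).le]
    have h1 : ‖L x 0 s + α‖ ≤ M₀ + |α| := by
      rw [Real.norm_eq_abs]
      exact (abs_add_le _ _).trans (by have := hM x s; gcongr)
    have h3 := (Real.exp_pos (F s - F t)).le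
    nlinarith

lemma wkSet_nonempty (hm : 0 < m) (hFb : ∀ s, |F s - m*s| ≤ B) (hFc : Continuous F)
    (hLc : Continuous fun q : Evec n × Evec n × ℝ => L q.1 q.2.1 q.2.2)
    (hM : ∀ (x : Evec n) (s : ℝ), |L x 0 s| ≤ M₀)
    (x : Evec n) (t : ℝ) : (wkSet F L α x t).Nonempty :=
  ⟨_, (fun _ => x), (fun _ => 0), fun a _ b _ => ⟨intervalIntegrable_const, by simp⟩,
    rfl, const_integrand_integrable hm hFb hFc hLc hM x t, rfl⟩

lemma wkSet_const_le (hm : 0 < m) (hFb : ∀ s, |F s - m*s| ≤ B) (hFc : Continuous F)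
    (hM0 : 0 ≤ M₀) (hM : ∀ (x : Evec n) (s : ℝ), |L x 0 s| ≤ M₀)
    (hLc : Continuous fun q : Evec n × Evec n × ℝ => L q.1 q.2.1 q.2.2)
    (x : Evec n) (t : ℝ) :
    (∫ s in Set.Iic t, Real.exp (F s - F t) * (L x 0 s + α))
      ≤ (M₀ + |α|) * (Real.exp (2*B) / m) := by
  have hwint := weight_integrableOn hm hFb hFc t
  have hI := const_integrand_integrable (α := α) hm hFb hFc hLc hM x t
  have h1 : ∫ s in Set.Iic t, Real.exp (F s - F t) * (L x 0 s + α) ≤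
      ∫ s in Set.Iic t, (M₀ + |α|) * Real.exp (F s - F t) := by
    refine setIntegral_mono_on ?_ (hwint.const_mul _) measurableSet_Iic fun s _ => ?_
    · exact hI
    · have h2 := abs_le.mp (hM x s)
      have h2b := abs_le.mp (le_refl |α|)
      have h3 := (Real.exp_pos (F s - F t)).le
      have h4 : L x 0 s + α ≤ M₀ + |α| := by
        have := le_abs_self α; linarith
      nlinarith
  rw [integral_const_mul] at h1
  have h4 := weight_integral_le hm hFb hFc t
  have h5 := weight_integral_nonneg (F := F) t
  have h6 : 0 ≤ M₀ + |α| := by positivity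
  nlinarith

lemma uWK_lb (hm : 0 < m) (hFb : ∀ s, |F s - m*s| ≤ B) (hFc : Continuous F)
    (hC0 : 0 ≤ C) (hCl : ∀ (x v : Evec n) (s : ℝ), -C ≤ L x v s + α)
    (hLc : Continuous fun q : Evec n × Evec n × ℝ => L q.1 q.2.1 q.2.2)
    (hM : ∀ (x : Evec n) (s : ℝ), |L x 0 s| ≤ M₀)
    (x : Evec n) (t : ℝ) : -(C * (Real.exp (2*B) / m)) ≤ uWK F L α x t :=
  le_csInf (wkSet_nonempty hm hFb hFc hLc hM x t) fun _ hr => wkSet_lb hm hFb hFc hC0 hCl hr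

lemma uWK_ub (hm : 0 < m) (hFb : ∀ s, |F s - m*s| ≤ B) (hFc : Continuous F)
    (hC0 : 0 ≤ C) (hCl : ∀ (x v : Evec n) (s : ℝ), -C ≤ L x v s + α)
    (hM0 : 0 ≤ M₀) (hM : ∀ (x : Evec n) (s : ℝ), |L x 0 s| ≤ M₀)
    (hLc : Continuous fun q : Evec n × Evec n × ℝ => L q.1 q.2.1 q.2.2)
    (x : Evec n) (t : ℝ) : uWK F L α x t ≤ (M₀ + |α|) * (Real.exp (2*B) / m) :=
  (csInf_le (wkSet_bddBelow hm hFb hFc hC0 hCl x t)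
    ⟨(fun _ => x), (fun _ => 0), fun a _ b _ => ⟨intervalIntegrable_const, by simp⟩,
      rfl, const_integrand_integrable hm hFb hFc hLc hM x t, rfl⟩).trans
    (wkSet_const_le hm hFb hFc hM0 hM hLc x t)

lemma wkSet_subset_shift
    (hLxper : ∀ (k : Fin n → ℤ) (x v : Evec n) (t : ℝ), L (x + intVec k) v t = L x v t)
    (k : Fin n → ℤ) (x : Evec n) (t : ℝ) :
    wkSet F L α x t ⊆ wkSet F L α (x + intVec k) t := by
  rintro r ⟨ξ, ξ', hAC, hξt, hI, rfl⟩
  refine ⟨fun s => ξ s + intVec k, ξ', ?_, by show ξ t + intVec k = x + intVec k; rw [hξt], ?_, ?_⟩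
  · intro a ha b hb
    obtain ⟨h1, h2⟩ := hAC a ha b hb
    refine ⟨h1, ?_⟩
    show ξ b + intVec k = ξ a + intVec k + ∫ τ in a..b, ξ' τ
    rw [h2]; abel
  · simpa only [hLxper] using hI
  · simp only [hLxper]

lemma uWK_shift
    (hLxper : ∀ (k : Fin n → ℤ) (x v : Evec n) (t : ℝ), L (x + intVec k) v t = L x v t)
    (k : Fin n → ℤ) (x : Evec n) (t : ℝ) :
    uWK F L α (x + intVec k) t = uWK F L α x t := by
  unfold uWK
  congr 1
  apply Set.Subset.antisymm
  · have h := wkSet_subset_shift (F := F) (α := α) hLxper (fun i => -(k i)) (x + intVec k) t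
    have he : x + intVec k + intVec (fun i => -(k i)) = x := by
      ext i
      simp [intVec, PiLp.add_apply]
    rwa [he] at h
  · exact wkSet_subset_shift hLxper k x t

lemma acOn_concat {s t : ℝ} (hst : s ≤ t) {ξ ξ' η η' : ℝ → Evec n}
    (hξ : ACOn ξ ξ' (Set.Iic s)) (hη : ACOn η η' (Set.Icc s t)) (hmatch : ξ s = η s) :
    ACOn (fun τ => if τ ≤ s then ξ τ else η τ) (fun τ => if τ ≤ s then ξ' τ else η' τ)
      (Set.Iic t) := by
  set ζ : ℝ → Evec n := fun τ => if τ ≤ s then ξ τ else η τ with hζdef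
  set ζ' : ℝ → Evec n := fun τ => if τ ≤ s then ξ' τ else η' τ with hζ'def
  have hII1 : ∀ a b : ℝ, a ≤ b → b ≤ s → IntervalIntegrable ζ' volume a b := by
    intro a b hab hbs
    have h0 := (hξ a (Set.mem_Iic.mpr (hab.trans hbs)) b (Set.mem_Iic.mpr hbs)).1
    rw [intervalIntegrable_iff_integrableOn_Ioc_of_le hab] at h0 ⊢
    exact h0.congr_fun (fun τ hτ => by simp [hζ'def, hτ.2.trans hbs]) measurableSet_Ioc
  have hII2 : ∀ a b : ℝ, s ≤ a → a ≤ b → b ≤ t → IntervalIntegrable ζ' volume a b := by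
    intro a b hsa hab hbt
    have h0 := (hη a ⟨hsa, hab.trans hbt⟩ b ⟨hsa.trans hab, hbt⟩).1
    rw [intervalIntegrable_iff_integrableOn_Ioc_of_le hab] at h0 ⊢
    exact h0.congr_fun
      (fun τ hτ => by simp [hζ'def, not_le.mpr (lt_of_le_of_lt hsa hτ.1)]) measurableSet_Ioc
  have hIIall : ∀ a b : ℝ, a ≤ b → b ≤ t → IntervalIntegrable ζ' volume a b := by
    intro a b hab hbt
    rcases le_or_gt b s with hbs | hsb
    · exact hII1 a b hab hbs
    · rcases le_or_gt a s with has | hsa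
      · exact (hII1 a s has le_rfl).trans (hII2 s b le_rfl hsb.le hbt)
      · exact hII2 a b hsa.le hab hbt
  apply acOn_of_le
  intro a ha b hb hab
  refine ⟨hIIall a b hab hb, ?_⟩
  rcases le_or_gt b s with hbs | hsb
  · have has : a ≤ s := hab.trans hbs
    have h2 := (hξ a (Set.mem_Iic.mpr has) b (Set.mem_Iic.mpr hbs)).2
    have hcongr : (∫ τ in a..b, ζ' τ) = ∫ τ in a..b, ξ' τ := by
      apply intervalIntegral.integral_congr
      intro τ hτ
      rw [Set.uIcc_of_le hab] at hτ
      simp [hζ'def, hτ.2.trans hbs]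
    simp only [hζdef, if_pos hbs, if_pos has]
    rw [hcongr]; exact h2
  · rcases le_or_gt a s with has | hsa
    · have e1 := (hξ a (Set.mem_Iic.mpr has) s (Set.mem_Iic.mpr le_rfl)).2
      have e2 := (hη s ⟨le_rfl, hst⟩ b ⟨hsb.le, hb⟩).2
      have i1 : (∫ τ in a..s, ζ' τ) = ∫ τ in a..s, ξ' τ := by
        apply intervalIntegral.integral_congr
        intro τ hτ
        rw [Set.uIcc_of_le has] at hτ
        simp [hζ'def, hτ.2]
      have i2 : (∫ τ in s..b, ζ' τ) = ∫ τ in s..b, η' τ := by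
        apply intervalIntegral.integral_congr_ae
        apply Filter.Eventually.of_forall
        intro τ hτ
        rw [Set.uIoc_of_le hsb.le] at hτ
        simp [hζ'def, not_le.mpr hτ.1]
      have isum := intervalIntegral.integral_add_adjacent_intervals
        (hII1 a s has le_rfl) (hII2 s b le_rfl hsb.le hb)
      simp only [hζdef, if_neg (not_le.mpr hsb), if_pos has]
      rw [← isum, i1, i2, e2, ← hmatch, e1]
      abel
    · have e2 := (hη a ⟨hsa.le, hab.trans hb⟩ b ⟨hsa.le.trans hab, hb⟩).2
      have i2 : (∫ τ in a..b, ζ' τ) = ∫ τ in a..b, η' τ := by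
        apply intervalIntegral.integral_congr_ae
        apply Filter.Eventually.of_forall
        intro τ hτ
        rw [Set.uIoc_of_le hab] at hτ
        simp [hζ'def, not_le.mpr (lt_of_le_of_lt hsa.le hτ.1)]
      simp only [hζdef, if_neg (not_le.mpr hsb), if_neg (not_le.mpr hsa)]
      rw [i2]; exact e2

lemma intervalIntegrable_if {s a b : ℝ} (has : a ≤ s) (hsb : s ≤ b) {u v : ℝ → ℝ}
    (hu : IntervalIntegrable u volume a s) (hv : IntervalIntegrable v volume s b) :
    IntervalIntegrable (fun τ => if τ ≤ s then u τ else v τ) volume a b := by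
  refine IntervalIntegrable.trans (b := s) ?_ ?_
  · rw [intervalIntegrable_iff_integrableOn_Ioc_of_le has] at hu ⊢
    exact hu.congr_fun (fun τ hτ => by simp [hτ.2]) measurableSet_Ioc
  · rw [intervalIntegrable_iff_integrableOn_Ioc_of_le hsb] at hv ⊢
    exact hv.congr_fun (fun τ hτ => by simp [not_le.mpr hτ.1]) measurableSet_Ioc

lemma concat_mem_wkSet {s t : ℝ} (hst : s ≤ t) {ξ ξ' η η' : ℝ → Evec n} {r : ℝ}
    (hACξ : ACOn ξ ξ' (Set.Iic s))
    (hIξ : IntegrableOn (fun τ => Real.exp (F τ - F s) * (L (ξ τ) (ξ' τ) τ + α)) (Set.Iic s))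
    (hrval : r = ∫ τ in Set.Iic s, Real.exp (F τ - F s) * (L (ξ τ) (ξ' τ) τ + α))
    (hACη : ACOn η η' (Set.Icc s t))
    (hIη : IntervalIntegrable (fun τ => Real.exp (F τ) * (L (η τ) (η' τ) τ + α)) volume s t)
    (hmatch : ξ s = η s) :
    Real.exp (F s - F t) * r +
      Real.exp (-F t) * ∫ τ in s..t, Real.exp (F τ) * (L (η τ) (η' τ) τ + α)
      ∈ wkSet F L α (η t) t := by
  set ζ : ℝ → Evec n := fun τ => if τ ≤ s then ξ τ else η τ with hζdef
  set ζ' : ℝ → Evec n := fun τ => if τ ≤ s then ξ' τ else η' τ with hζ'def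
  have hζt : ζ t = η t := by
    by_cases h : t ≤ s
    · have hts : s = t := le_antisymm hst h
      simp only [hζdef, if_pos h]
      rw [hts] at hmatch
      exact hmatch
    · simp only [hζdef, if_neg h]
  have hEq1 : ∀ τ ∈ Set.Iic s,
      Real.exp (F s - F t) * (Real.exp (F τ - F s) * (L (ξ τ) (ξ' τ) τ + α))
        = Real.exp (F τ - F t) * (L (ζ τ) (ζ' τ) τ + α) := by
    intro τ hτ
    have hτs : τ ≤ s := hτ
    simp only [hζdef, hζ'def, if_pos hτs]
    rw [← mul_assoc, ← Real.exp_add]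
    have he : F s - F t + (F τ - F s) = F τ - F t := by ring
    rw [he]
  have hEq2 : ∀ τ ∈ Set.Ioc s t,
      Real.exp (-F t) * (Real.exp (F τ) * (L (η τ) (η' τ) τ + α))
        = Real.exp (F τ - F t) * (L (ζ τ) (ζ' τ) τ + α) := by
    intro τ hτ
    have hn : ¬ τ ≤ s := not_le.mpr hτ.1
    simp only [hζdef, hζ'def, if_neg hn]
    rw [← mul_assoc, ← Real.exp_add]
    have he : -F t + F τ = F τ - F t := by ring
    rw [he]
  have hpiece1 : IntegrableOn
      (fun τ => Real.exp (F τ - F t) * (L (ζ τ) (ζ' τ) τ + α)) (Set.Iic s) :=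
    IntegrableOn.congr_fun (hIξ.const_mul (Real.exp (F s - F t))) hEq1 measurableSet_Iic
  have hpiece2 : IntegrableOn
      (fun τ => Real.exp (F τ - F t) * (L (ζ τ) (ζ' τ) τ + α)) (Set.Ioc s t) := by
    have h3 : IntegrableOn (fun τ => Real.exp (F τ) * (L (η τ) (η' τ) τ + α)) (Set.Ioc s t) := by
      rw [← intervalIntegrable_iff_integrableOn_Ioc_of_le hst]; exact hIη
    exact IntegrableOn.congr_fun (h3.const_mul (Real.exp (-F t))) hEq2 measurableSet_Ioc
  have hIint : IntegrableOn
      (fun τ => Real.exp (F τ - F t) * (L (ζ τ) (ζ' τ) τ + α)) (Set.Iic t) := by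
    rw [← Set.Iic_union_Ioc_eq_Iic hst, integrableOn_union]
    exact ⟨hpiece1, hpiece2⟩
  refine ⟨ζ, ζ', acOn_concat hst hACξ hACη hmatch, hζt, hIint, ?_⟩
  have hsplit : (∫ τ in Set.Iic t, Real.exp (F τ - F t) * (L (ζ τ) (ζ' τ) τ + α))
      = (∫ τ in Set.Iic s, Real.exp (F τ - F t) * (L (ζ τ) (ζ' τ) τ + α))
        + ∫ τ in Set.Ioc s t, Real.exp (F τ - F t) * (L (ζ τ) (ζ' τ) τ + α) := by
    rw [← Set.Iic_union_Ioc_eq_Iic hst]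
    exact setIntegral_union (Set.Iic_disjoint_Ioc le_rfl) measurableSet_Ioc hpiece1 hpiece2
  have hpart1 : (∫ τ in Set.Iic s, Real.exp (F τ - F t) * (L (ζ τ) (ζ' τ) τ + α))
      = Real.exp (F s - F t) * r := by
    rw [← setIntegral_congr_fun measurableSet_Iic hEq1, integral_const_mul, hrval]
  have hpart2 : (∫ τ in Set.Ioc s t, Real.exp (F τ - F t) * (L (ζ τ) (ζ' τ) τ + α))
      = Real.exp (-F t) * ∫ τ in s..t, Real.exp (F τ) * (L (η τ) (η' τ) τ + α) := by
    rw [← setIntegral_congr_fun measurableSet_Ioc hEq2, integral_const_mul,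
      intervalIntegral.integral_of_le hst]
  rw [hsplit, hpart1, hpart2]

lemma dominate (hm : 0 < m) (hFb : ∀ s, |F s - m*s| ≤ B) (hFc : Continuous F)
    (hC0 : 0 ≤ C) (hCl : ∀ (x v : Evec n) (s : ℝ), -C ≤ L x v s + α)
    (hLc : Continuous fun q : Evec n × Evec n × ℝ => L q.1 q.2.1 q.2.2)
    (hM : ∀ (x : Evec n) (s : ℝ), |L x 0 s| ≤ M₀)
    {η η' : ℝ → Evec n} {s t : ℝ} (hst : s ≤ t)
    (hACη : ACOn η η' (Set.Icc s t))
    (hIη : IntervalIntegrable (fun τ => Real.exp (F τ) * (L (η τ) (η' τ) τ + α)) volume s t) :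
    Real.exp (F t) * uWK F L α (η t) t ≤ Real.exp (F s) * uWK F L α (η s) s
      + ∫ τ in s..t, Real.exp (F τ) * (L (η τ) (η' τ) τ + α) := by
  have hne : (wkSet F L α (η s) s).Nonempty := wkSet_nonempty hm hFb hFc hLc hM _ _
  have hbdd : BddBelow (wkSet F L α (η t) t) := wkSet_bddBelow hm hFb hFc hC0 hCl _ _
  set c := ∫ τ in s..t, Real.exp (F τ) * (L (η τ) (η' τ) τ + α) with hc
  have key : ∀ r ∈ wkSet F L α (η s) s,
      Real.exp (F t) * uWK F L α (η t) t ≤ Real.exp (F s) * r + c := by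
    rintro r ⟨ξ, ξ', hACξ, hξs, hIξ, hrval⟩
    have hmem := concat_mem_wkSet hst hACξ hIξ hrval hACη hIη hξs
    have h1 : uWK F L α (η t) t ≤ Real.exp (F s - F t) * r +
        Real.exp (-F t) * c := csInf_le hbdd hmem
    have h3 : Real.exp (F t) * (Real.exp (F s - F t) * r + Real.exp (-F t) * c)
        = Real.exp (F s) * r + c := by
      rw [mul_add, ← mul_assoc, ← mul_assoc, ← Real.exp_add, ← Real.exp_add]
      have e1 : F t + (F s - F t) = F s := by ring
      have e2 : F t + -F t = 0 := by ring
      rw [e1, e2, Real.exp_zero, one_mul]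
    calc Real.exp (F t) * uWK F L α (η t) t
        ≤ Real.exp (F t) * (Real.exp (F s - F t) * r + Real.exp (-F t) * c) :=
          mul_le_mul_of_nonneg_left h1 (Real.exp_pos (F t)).le
      _ = Real.exp (F s) * r + c := h3
  have h4 : (Real.exp (F t) * uWK F L α (η t) t - c) / Real.exp (F s) ≤ uWK F L α (η s) s := by
    apply le_csInf hne
    intro r hr
    rw [div_le_iff₀ (Real.exp_pos (F s))]
    have h5 := key r hr
    nlinarith [mul_comm r (Real.exp (F s))]
  rw [div_le_iff₀ (Real.exp_pos (F s))] at h4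
  nlinarith [mul_comm (uWK F L α (η s) s) (Real.exp (F s))]

lemma wkSet_split (hm : 0 < m) (hFb : ∀ s, |F s - m*s| ≤ B) (hFc : Continuous F)
    (hC0 : 0 ≤ C) (hCl : ∀ (x v : Evec n) (s : ℝ), -C ≤ L x v s + α)
    {s t : ℝ} (hst : s ≤ t) {x : Evec n} {r : ℝ} {ξ ξ' : ℝ → Evec n}
    (hAC : ACOn ξ ξ' (Set.Iic t)) (hxt : ξ t = x)
    (hI : IntegrableOn (fun τ => Real.exp (F τ - F t) * (L (ξ τ) (ξ' τ) τ + α)) (Set.Iic t))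
    (hr : r = ∫ τ in Set.Iic t, Real.exp (F τ - F t) * (L (ξ τ) (ξ' τ) τ + α)) :
    Real.exp (F s) * uWK F L α (ξ s) s
      + (∫ τ in s..t, Real.exp (F τ) * (L (ξ τ) (ξ' τ) τ + α)) ≤ Real.exp (F t) * r := by
  have hbdd : BddBelow (wkSet F L α (ξ s) s) := wkSet_bddBelow hm hFb hFc hC0 hCl _ _
  have hEq : ∀ τ : ℝ, Real.exp (F t) * (Real.exp (F τ - F t) * (L (ξ τ) (ξ' τ) τ + α))
      = Real.exp (F τ) * (L (ξ τ) (ξ' τ) τ + α) := by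
    intro τ
    rw [← mul_assoc, ← Real.exp_add]
    have he : F t + (F τ - F t) = F τ := by ring
    rw [he]
  have hgIic : IntegrableOn (fun τ => Real.exp (F τ) * (L (ξ τ) (ξ' τ) τ + α)) (Set.Iic t) :=
    IntegrableOn.congr_fun (hI.const_mul (Real.exp (F t))) (fun τ _ => hEq τ) measurableSet_Iic
  have h2 : Real.exp (F t) * r = ∫ τ in Set.Iic t, Real.exp (F τ) * (L (ξ τ) (ξ' τ) τ + α) := by
    rw [hr, ← integral_const_mul]
    exact setIntegral_congr_fun measurableSet_Iic (fun τ _ => hEq τ)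
  have hsplit : (∫ τ in Set.Iic t, Real.exp (F τ) * (L (ξ τ) (ξ' τ) τ + α))
      = (∫ τ in Set.Iic s, Real.exp (F τ) * (L (ξ τ) (ξ' τ) τ + α))
        + ∫ τ in Set.Ioc s t, Real.exp (F τ) * (L (ξ τ) (ξ' τ) τ + α) := by
    rw [← Set.Iic_union_Ioc_eq_Iic hst]
    exact setIntegral_union (Set.Iic_disjoint_Ioc le_rfl) measurableSet_Ioc
      (hgIic.mono_set (Set.Iic_subset_Iic.mpr hst)) (hgIic.mono_set Set.Ioc_subset_Iic_self)
  have hEqs : ∀ τ : ℝ, Real.exp (-F s) * (Real.exp (F τ) * (L (ξ τ) (ξ' τ) τ + α))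
      = Real.exp (F τ - F s) * (L (ξ τ) (ξ' τ) τ + α) := by
    intro τ
    rw [← mul_assoc, ← Real.exp_add]
    have he : -F s + F τ = F τ - F s := by ring
    rw [he]
  have htail : (∫ τ in Set.Iic s, Real.exp (F τ - F s) * (L (ξ τ) (ξ' τ) τ + α))
      ∈ wkSet F L α (ξ s) s := by
    refine ⟨ξ, ξ', acOn_mono hAC (Set.Iic_subset_Iic.mpr hst), rfl, ?_, rfl⟩
    exact IntegrableOn.congr_fun ((hgIic.mono_set (Set.Iic_subset_Iic.mpr hst)).const_mul
      (Real.exp (-F s))) (fun τ _ => hEqs τ) measurableSet_Iic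
  have h6 : uWK F L α (ξ s) s ≤
      ∫ τ in Set.Iic s, Real.exp (F τ - F s) * (L (ξ τ) (ξ' τ) τ + α) := csInf_le hbdd htail
  have h7 : Real.exp (F s) *
        (∫ τ in Set.Iic s, Real.exp (F τ - F s) * (L (ξ τ) (ξ' τ) τ + α))
      = ∫ τ in Set.Iic s, Real.exp (F τ) * (L (ξ τ) (ξ' τ) τ + α) := by
    rw [← integral_const_mul]
    refine setIntegral_congr_fun measurableSet_Iic (fun τ _ => ?_)
    rw [← mul_assoc, ← Real.exp_add]
    have he : F s + (F τ - F s) = F τ := by ring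
    rw [he]
  have h8 : (∫ τ in Set.Ioc s t, Real.exp (F τ) * (L (ξ τ) (ξ' τ) τ + α))
      = ∫ τ in s..t, Real.exp (F τ) * (L (ξ τ) (ξ' τ) τ + α) :=
    (intervalIntegral.integral_of_le hst).symm
  have h9 := mul_le_mul_of_nonneg_left h6 (Real.exp_pos (F s)).le
  rw [h7] at h9
  rw [h2, hsplit, ← h8]
  linarith

end WK


end AuxWKAM

set_option maxHeartbeats 2000000 in
/-- An absolutely continuous curve `γ : ℝ → ℝⁿ` (with
locally integrable action) is globally calibrated by `u_α⁻` if and only if on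
every interval `[a,b]` it minimizes the action among absolutely continuous
curves whose endpoints agree with those of `γ` modulo `ℤⁿ`. -/
theorem globally_calibrated_iff_minimizing
    (n : ℕ) (hn : 1 ≤ n)
    (f F : ℝ → ℝ)
    (hf : Continuous f) (hfper : ∀ t, f (t + 1) = f t)
    (hfmean : 0 < ∫ t in (0:ℝ)..1, f t)
    (hF : ∀ t, F t = ∫ τ in (0:ℝ)..t, f τ)
    (L : Evec n → Evec n → ℝ → ℝ)
    (hLsm : ContDiff ℝ 2 (fun q : Evec n × Evec n × ℝ => L q.1 q.2.1 q.2.2))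
    (hLxper : ∀ (k : Fin n → ℤ) (x v : Evec n) (t : ℝ), L (x + intVec k) v t = L x v t)
    (hLtper : ∀ (x v : Evec n) (t : ℝ), L x v (t + 1) = L x v t)
    (hLconv : ∀ (x : Evec n) (t : ℝ) (v w : Evec n), w ≠ 0 →
      0 < iteratedFDeriv ℝ 2 (fun v' => L x v' t) v ![w, w])
    (hLsuper : ∀ k : ℝ, 0 ≤ k → ∃ C : ℝ, ∀ x v t, k * ‖v‖ - C ≤ L x v t)
    (hcomp : ∀ (x₀ v₀ : Evec n) (t₀ : ℝ), ∃ γ : ℝ → Evec n,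
      ContDiff ℝ 2 γ ∧ γ t₀ = x₀ ∧ deriv γ t₀ = v₀ ∧
      ∀ t : ℝ, HasDerivAt
        (fun σ => fderiv ℝ (fun v => L (γ σ) v σ) (deriv γ σ))
        (fderiv ℝ (fun y => L y (deriv γ t) t) (γ t)
          - f t • fderiv ℝ (fun v => L (γ t) v t) (deriv γ t)) t)
    (α : ℝ) (γ γ' : ℝ → Evec n)
    (hγ : ACOn γ γ' Set.univ)
    (hγint : ∀ a b : ℝ, IntervalIntegrable
      (fun τ => Real.exp (F τ) * (L (γ τ) (γ' τ) τ + α)) MeasureTheory.volume a b) :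
    (∀ t₁ t₂ : ℝ, t₁ ≤ t₂ →
        Real.exp (F t₂) * uWK F L α (γ t₂) t₂ - Real.exp (F t₁) * uWK F L α (γ t₁) t₁ =
          ∫ τ in t₁..t₂, Real.exp (F τ) * (L (γ τ) (γ' τ) τ + α)) ↔
    (∀ a b : ℝ, a < b →
        (∫ τ in a..b, Real.exp (F τ) * (L (γ τ) (γ' τ) τ + α)) =
          sInf { r | ∃ η η' : ℝ → Evec n, ACOn η η' (Set.Icc a b) ∧
            (∃ k : Fin n → ℤ, η a = γ a + intVec k) ∧
            (∃ k : Fin n → ℤ, η b = γ b + intVec k) ∧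
            IntervalIntegrable (fun τ => Real.exp (F τ) * (L (η τ) (η' τ) τ + α))
              MeasureTheory.volume a b ∧
            r = ∫ τ in a..b, Real.exp (F τ) * (L (η τ) (η' τ) τ + α) }) := by
  have hm : 0 < ∫ t in (0:ℝ)..1, f t := hfmean
  set m : ℝ := ∫ t in (0:ℝ)..1, f t with hmdef
  obtain ⟨B, hB0, hFb⟩ := F_lin_bound hf hfper hF
  have hFc : Continuous F := F_continuous hf hF
  have hLc : Continuous fun q : Evec n × Evec n × ℝ => L q.1 q.2.1 q.2.2 := hLsm.continuous
  obtain ⟨C₀, hC₀⟩ := hLsuper 0 le_rfl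
  set C : ℝ := max C₀ 0 + |α| with hCdef
  have hC0 : 0 ≤ C := add_nonneg (le_max_right _ _) (abs_nonneg _)
  have hCl : ∀ (x v : Evec n) (s : ℝ), -C ≤ L x v s + α := by
    intro x v s
    have h1 := hC₀ x v s
    rw [zero_mul, zero_sub] at h1
    have h2 := neg_abs_le α
    have h3 := le_max_left C₀ 0
    rw [hCdef]; linarith
  obtain ⟨M, hM0, hMb⟩ := L_bound hLc hLxper hLtper (Real.sqrt n)
  have hM : ∀ (x : Evec n) (s : ℝ), |L x 0 s| ≤ M := fun x s =>
    hMb x 0 s (by simpa using Real.sqrt_nonneg (n:ℝ))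
  set Ibar : ℝ := Real.exp (2*B)/m with hIbardef
  have hIbar0 : 0 ≤ Ibar := by positivity
  have hne : ∀ (x : Evec n) (t : ℝ), (wkSet F L α x t).Nonempty :=
    fun x t => wkSet_nonempty hm hFb hFc hLc hM x t
  have hulb : ∀ (x : Evec n) (t : ℝ), -(C * Ibar) ≤ uWK F L α x t :=
    fun x t => uWK_lb hm hFb hFc hC0 hCl hLc hM x t
  have huub : ∀ (x : Evec n) (t : ℝ), uWK F L α x t ≤ (M + |α|) * Ibar :=
    fun x t => uWK_ub hm hFb hFc hC0 hCl hM0 hM hLc x t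
  have hSlb : ∀ (a b : ℝ), a ≤ b → ∀ r ∈ { r | ∃ η η' : ℝ → Evec n, ACOn η η' (Set.Icc a b) ∧
            (∃ k : Fin n → ℤ, η a = γ a + intVec k) ∧
            (∃ k : Fin n → ℤ, η b = γ b + intVec k) ∧
            IntervalIntegrable (fun τ => Real.exp (F τ) * (L (η τ) (η' τ) τ + α))
              MeasureTheory.volume a b ∧
            r = ∫ τ in a..b, Real.exp (F τ) * (L (η τ) (η' τ) τ + α) },
      (∫ τ in a..b, -C * Real.exp (F τ)) ≤ r := by
    rintro a b hab r ⟨η, η', hACη, -, -, hIη, rfl⟩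
    refine intervalIntegral.integral_mono_on hab
      ((continuous_const.mul (continuous_exp.comp hFc)).intervalIntegrable a b) hIη
      (fun τ _ => ?_)
    have h2 := hCl (η τ) (η' τ) τ
    nlinarith [(Real.exp_pos (F τ)).le, mul_le_mul_of_nonneg_left h2 (Real.exp_pos (F τ)).le]
  have hγmem : ∀ (a b : ℝ),
      (∫ τ in a..b, Real.exp (F τ) * (L (γ τ) (γ' τ) τ + α)) ∈
        { r | ∃ η η' : ℝ → Evec n, ACOn η η' (Set.Icc a b) ∧
            (∃ k : Fin n → ℤ, η a = γ a + intVec k) ∧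
            (∃ k : Fin n → ℤ, η b = γ b + intVec k) ∧
            IntervalIntegrable (fun τ => Real.exp (F τ) * (L (η τ) (η' τ) τ + α))
              MeasureTheory.volume a b ∧
            r = ∫ τ in a..b, Real.exp (F τ) * (L (η τ) (η' τ) τ + α) } :=
    fun a b => ⟨γ, γ', acOn_mono hγ (Set.subset_univ _),
      ⟨fun _ => 0, by rw [intVec_zero, add_zero]⟩,
      ⟨fun _ => 0, by rw [intVec_zero, add_zero]⟩, hγint a b, rfl⟩
  constructor
  · intro hcal a b hab
    apply le_antisymm
    · refine le_csInf ⟨_, hγmem a b⟩ ?_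
      rintro r ⟨η, η', hACη, ⟨k₁, hk₁⟩, ⟨k₂, hk₂⟩, hIη, rfl⟩
      have h1 := dominate hm hFb hFc hC0 hCl hLc hM hab.le hACη hIη
      rw [hk₁, hk₂, uWK_shift hLxper, uWK_shift hLxper] at h1
      have h2 := hcal a b hab.le
      linarith
    · exact csInf_le ⟨_, hSlb a b hab.le⟩ (hγmem a b)
  · intro hmin t₁ t₂ h12
    rcases h12.eq_or_lt with heq | hlt
    · subst heq
      simp
    · apply le_antisymm
      · have h1 := dominate hm hFb hFc hC0 hCl hLc hM h12
          (acOn_mono hγ (Set.subset_univ _)) (hγint t₁ t₂)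
        linarith
      · set D : ℝ := Real.exp (F t₂) * uWK F L α (γ t₂) t₂
          - Real.exp (F t₁) * uWK F L α (γ t₁) t₁ with hD
        set K : ℝ := C*Ibar*Real.exp B + C*Real.exp (B+m) + (M+|α|)*Ibar*Real.exp B
          + (M+|α|)*Real.exp (B+m) with hK
        have key : ∀ ε : ℝ, 0 < ε → ∀ a : ℝ, a ≤ t₁ - 1 →
            (∫ τ in t₁..t₂, Real.exp (F τ) * (L (γ τ) (γ' τ) τ + α))
              ≤ D + Real.exp (F t₂) * ε + K * Real.exp (m*a) := by
          intro ε hε a ha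
          have hat₂ : a < t₂ := by linarith
          have hat₁ : a ≤ t₁ := by linarith
          have hab₁ : a ≤ a + 1 := by linarith
          have hb₁t₂ : a + 1 ≤ t₂ := by linarith
          have hb₁lt : a + 1 < t₂ := by linarith
          obtain ⟨r, hrmem, hrlt⟩ := Real.lt_sInf_add_pos (hne (γ t₂) t₂) hε
          have hrlt' : r < uWK F L α (γ t₂) t₂ + ε := hrlt
          obtain ⟨ξ, ξ', hACξ, hξt₂, hIξ, hrval⟩ := hrmem
          have h1 := wkSet_split hm hFb hFc hC0 hCl hat₂.le hACξ hξt₂ hIξ hrval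
          have hgξint : ∀ a' b' : ℝ, a' ≤ b' → b' ≤ t₂ →
              IntervalIntegrable (fun τ => Real.exp (F τ) * (L (ξ τ) (ξ' τ) τ + α))
                volume a' b' := by
            intro a' b' h1' h2'
            rw [intervalIntegrable_iff_integrableOn_Ioc_of_le h1']
            refine IntegrableOn.congr_fun
              ((hIξ.mono_set (fun τ hτ => le_trans hτ.2 h2')).const_mul (Real.exp (F t₂)))
              (fun τ _ => ?_) measurableSet_Ioc
            rw [← mul_assoc, ← Real.exp_add]
            have he : F t₂ + (F τ - F t₂) = F τ := by ring
            rw [he]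
          have hsplitξ := intervalIntegral.integral_add_adjacent_intervals
            (hgξint a (a+1) hab₁ hb₁t₂) (hgξint (a+1) t₂ hb₁t₂ le_rfl)
          have hexpbd : ∀ τ : ℝ, τ ≤ a + 1 →
              Real.exp (F τ) ≤ Real.exp (B+m) * Real.exp (m*a) := by
            intro τ hτ
            rw [← Real.exp_add]
            apply Real.exp_le_exp.mpr
            have h4 := abs_le.mp (hFb τ)
            nlinarith
          have hAξ1 : -(C * Real.exp (B + m) * Real.exp (m*a)) ≤
              ∫ τ in a..(a+1), Real.exp (F τ) * (L (ξ τ) (ξ' τ) τ + α) := by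
            have hmono := intervalIntegral.integral_mono_on hab₁
              (intervalIntegrable_const (c := -(C * Real.exp (B + m) * Real.exp (m*a))))
              (hgξint a (a+1) hab₁ hb₁t₂) (fun τ hτ => ?_)
            · simpa using hmono
            · have h2 := hCl (ξ τ) (ξ' τ) τ
              have h3 := hexpbd τ hτ.2
              nlinarith [mul_le_mul_of_nonneg_left h2 (Real.exp_pos (F τ)).le,
                mul_le_mul_of_nonneg_left h3 hC0]
          obtain ⟨k, hk⟩ := exists_intVec_close (γ a) (ξ (a+1))
          set p : Evec n := γ a + intVec k with hp
          set q : Evec n := ξ (a+1) with hq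
          set β : ℝ → Evec n := fun τ => p + (τ - a) • (q - p) with hβ
          set β' : ℝ → Evec n := fun _ => q - p with hβ'
          have hACβ : ACOn β β' Set.univ := by
            intro a' _ b' _
            refine ⟨intervalIntegrable_const, ?_⟩
            show p + (b' - a) • (q - p) = p + (a' - a) • (q - p) + ∫ _τ in a'..b', (q - p)
            rw [intervalIntegral.integral_const]
            rw [show b' - a = (a' - a) + (b' - a') by ring, add_smul]
            abel
          have hβa : β a = p := by
            show p + (a - a) • (q - p) = p
            simp
          have hβb : β (a+1) = q := by
            show p + (a + 1 - a) • (q - p) = q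
            rw [show a + 1 - a = (1:ℝ) by ring, one_smul]
            abel
          have hnorm : ‖q - p‖ ≤ Real.sqrt n := by
            rw [norm_sub_rev]
            exact hk
          have hβc : Continuous β :=
            continuous_const.add ((continuous_id.sub continuous_const).smul continuous_const)
          have hbrc : Continuous (fun τ => Real.exp (F τ) * (L (β τ) (β' τ) τ + α)) := by
            apply Continuous.mul (continuous_exp.comp hFc)
            apply Continuous.add ?_ continuous_const
            exact hLc.comp (hβc.prodMk
              ((continuous_const : Continuous fun _ : ℝ => q - p).prodMk continuous_id))
          have hAbr : (∫ τ in a..(a+1), Real.exp (F τ) * (L (β τ) (β' τ) τ + α))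
              ≤ (M + |α|) * Real.exp (B + m) * Real.exp (m*a) := by
            have hmono := intervalIntegral.integral_mono_on (μ := volume) hab₁
              (hbrc.intervalIntegrable a (a+1))
              (intervalIntegrable_const
                (c := (M + |α|) * Real.exp (B + m) * Real.exp (m*a))) (fun τ hτ => ?_)
            · simpa using hmono
            · have hLb := abs_le.mp (hMb (β τ) (β' τ) τ hnorm)
              have h3 := hexpbd τ hτ.2
              have h4 : L (β τ) (β' τ) τ + α ≤ M + |α| := by
                have := le_abs_self α; linarith [hLb.2]
              nlinarith [mul_le_mul_of_nonneg_left h4 (Real.exp_pos (F τ)).le,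
                mul_le_mul_of_nonneg_right h3 (by positivity : (0:ℝ) ≤ M + |α|)]
          set η : ℝ → Evec n := fun τ => if τ ≤ a+1 then β τ else ξ τ with hη
          set η' : ℝ → Evec n := fun τ => if τ ≤ a+1 then β' τ else ξ' τ with hη'
          have hACη : ACOn η η' (Set.Icc a t₂) :=
            acOn_mono (acOn_concat hb₁t₂ (acOn_mono hACβ (Set.subset_univ _))
              (acOn_mono hACξ (fun τ hτ => Set.mem_Iic.mpr hτ.2)) (hβb.trans hq))
              Set.Icc_subset_Iic_self
          have hIIa : IntervalIntegrable (fun τ => Real.exp (F τ) * (L (η τ) (η' τ) τ + α))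
              volume a (a+1) := by
            rw [intervalIntegrable_iff_integrableOn_Ioc_of_le hab₁]
            have hb0 := hbrc.intervalIntegrable (μ := volume) a (a+1)
            rw [intervalIntegrable_iff_integrableOn_Ioc_of_le hab₁] at hb0
            exact hb0.congr_fun (fun τ hτ => by simp [hη, hη', hτ.2]) measurableSet_Ioc
          have hIIb : IntervalIntegrable (fun τ => Real.exp (F τ) * (L (η τ) (η' τ) τ + α))
              volume (a+1) t₂ := by
            rw [intervalIntegrable_iff_integrableOn_Ioc_of_le hb₁t₂]
            have hb0 := hgξint (a+1) t₂ hb₁t₂ le_rfl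
            rw [intervalIntegrable_iff_integrableOn_Ioc_of_le hb₁t₂] at hb0
            exact hb0.congr_fun (fun τ hτ => by simp [hη, hη', not_le.mpr hτ.1])
              measurableSet_Ioc
          have hIηint : IntervalIntegrable (fun τ => Real.exp (F τ) * (L (η τ) (η' τ) τ + α))
              volume a t₂ := hIIa.trans hIIb
          have hηa : η a = γ a + intVec k := by
            show (if a ≤ a+1 then β a else ξ a) = γ a + intVec k
            rw [if_pos hab₁, hβa, hp]
          have hηt₂ : η t₂ = γ t₂ + intVec (fun _ => 0) := by
            show (if t₂ ≤ a+1 then β t₂ else ξ t₂) = _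
            rw [if_neg (not_le.mpr hb₁lt), hξt₂, intVec_zero, add_zero]
          have hsinfle : (∫ τ in a..t₂, Real.exp (F τ) * (L (γ τ) (γ' τ) τ + α))
              ≤ ∫ τ in a..t₂, Real.exp (F τ) * (L (η τ) (η' τ) τ + α) := by
            rw [hmin a t₂ hat₂]
            exact csInf_le ⟨_, hSlb a t₂ hat₂.le⟩
              ⟨η, η', hACη, ⟨k, hηa⟩, ⟨fun _ => 0, hηt₂⟩, hIηint, rfl⟩
          have hi1 : (∫ τ in a..(a+1), Real.exp (F τ) * (L (η τ) (η' τ) τ + α))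
              = ∫ τ in a..(a+1), Real.exp (F τ) * (L (β τ) (β' τ) τ + α) := by
            apply intervalIntegral.integral_congr
            intro τ hτ
            rw [Set.uIcc_of_le hab₁] at hτ
            simp [hη, hη', hτ.2]
          have hi2 : (∫ τ in (a+1)..t₂, Real.exp (F τ) * (L (η τ) (η' τ) τ + α))
              = ∫ τ in (a+1)..t₂, Real.exp (F τ) * (L (ξ τ) (ξ' τ) τ + α) := by
            apply intervalIntegral.integral_congr_ae
            apply Filter.Eventually.of_forall
            intro τ hτ
            rw [Set.uIoc_of_le hb₁t₂] at hτ
            simp [hη, hη', not_le.mpr hτ.1]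
          have hAη : (∫ τ in a..t₂, Real.exp (F τ) * (L (η τ) (η' τ) τ + α))
              = (∫ τ in a..(a+1), Real.exp (F τ) * (L (β τ) (β' τ) τ + α))
                + ∫ τ in (a+1)..t₂, Real.exp (F τ) * (L (ξ τ) (ξ' τ) τ + α) := by
            rw [← hi1, ← hi2]
            exact (intervalIntegral.integral_add_adjacent_intervals hIIa hIIb).symm
          have hAγsplit := intervalIntegral.integral_add_adjacent_intervals
            (hγint a t₁) (hγint t₁ t₂)
          have hdomγ := dominate hm hFb hFc hC0 hCl hLc hM hat₁
            (acOn_mono hγ (Set.subset_univ _)) (hγint a t₁)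
          have hexpa : Real.exp (F a) ≤ Real.exp B * Real.exp (m*a) := expF_le hFb a
          have hrup : Real.exp (F t₂) * r <
              Real.exp (F t₂) * (uWK F L α (γ t₂) t₂ + ε) :=
            mul_lt_mul_of_pos_left hrlt' (Real.exp_pos _)
          have hu1 : -(C*Ibar) ≤ uWK F L α (ξ a) a := hulb _ _
          have hu2 : uWK F L α (γ a) a ≤ (M+|α|)*Ibar := huub _ _
          have hb1 : -(C*Ibar*Real.exp B*Real.exp (m*a)) ≤
              Real.exp (F a) * uWK F L α (ξ a) a := by
            nlinarith [mul_le_mul_of_nonneg_left hu1 (Real.exp_pos (F a)).le,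
              mul_le_mul_of_nonneg_left hexpa (mul_nonneg hC0 hIbar0)]
          have hb2 : Real.exp (F a) * uWK F L α (γ a) a ≤
              (M+|α|)*Ibar*Real.exp B*Real.exp (m*a) := by
            nlinarith [mul_le_mul_of_nonneg_left hu2 (Real.exp_pos (F a)).le,
              mul_le_mul_of_nonneg_right hexpa
                (by positivity : (0:ℝ) ≤ (M+|α|)*Ibar)]
          rw [hK, hD]
          linarith [h1, hrup, hsplitξ, hAξ1, hsinfle, hAη, hAbr, hAγsplit, hdomγ, hb1, hb2]
        have hlim : ∀ ε : ℝ, 0 < ε →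
            (∫ τ in t₁..t₂, Real.exp (F τ) * (L (γ τ) (γ' τ) τ + α))
              ≤ D + Real.exp (F t₂) * ε := by
          intro ε hε
          have htd : Tendsto (fun a : ℝ => D + Real.exp (F t₂) * ε + K * Real.exp (m*a))
              atBot (𝓝 (D + Real.exp (F t₂) * ε + K * 0)) := by
            apply Tendsto.add tendsto_const_nhds
            exact (tendsto_exp_atBot.comp (tendsto_id.const_mul_atBot hm)).const_mul K
          rw [mul_zero, add_zero] at htd
          refine ge_of_tendsto htd ?_
          filter_upwards [eventually_le_atBot (t₁ - 1)] with a ha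
          exact key ε hε a ha
        have hfin : (∫ τ in t₁..t₂, Real.exp (F τ) * (L (γ τ) (γ' τ) τ + α)) ≤ D := by
          refine le_of_forall_pos_le_add fun ε hε => ?_
          have h := hlim (ε / Real.exp (F t₂)) (by positivity)
          rwa [mul_div_cancel₀ _ (Real.exp_ne_zero _)] at h
        exact hfin
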